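/- For every n ≥ 1, the softmax map from ℝⁿ to ℝⁿ, sending x to the vector whose i-th entry is exp(x_i) / Σ_{j=1}^{n} exp(x_j), is Lipschitz with constant 1 with respect to the Euclidean norm on both domain and codomain. -/

import Mathlib

noncomputable def softmax (n : ℕ) (x : EuclideanSpace ℝ (Fin n)) : EuclideanSpace ℝ (Fin n) :=
  WithLp.toLp 2 (fun i => Real.exp (x i) / ∑ j, Real.exp (x j))

namespace SoftmaxAux

variable (n : ℕ)

noncomputable def J (x : EuclideanSpace ℝ (Fin n)) :
    EuclideanSpace ℝ (Fin n) →L[ℝ] EuclideanSpace ℝ (Fin n) :=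
  ((EuclideanSpace.equiv (Fin n) ℝ).symm.toContinuousLinearMap).comp
    (ContinuousLinearMap.pi fun i =>
      softmax n x i • ((EuclideanSpace.proj i : EuclideanSpace ℝ (Fin n) →L[ℝ] ℝ)
        - ∑ j, softmax n x j • (EuclideanSpace.proj j : EuclideanSpace ℝ (Fin n) →L[ℝ] ℝ)))

lemma J_apply (x v : EuclideanSpace ℝ (Fin n)) (i : Fin n) :
    J n x v i = softmax n x i * (v i - ∑ j, softmax n x j * v j) := by
  simp [J, ContinuousLinearMap.pi_apply, smul_eq_mul]

variable {n} (hn : 1 ≤ n)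
include hn

lemma S_pos (x : EuclideanSpace ℝ (Fin n)) : 0 < ∑ j, Real.exp (x j) := by
  have : Nonempty (Fin n) := Fin.pos_iff_nonempty.mp hn
  exact Finset.sum_pos (fun j _ => Real.exp_pos _) Finset.univ_nonempty

lemma p_nonneg (x : EuclideanSpace ℝ (Fin n)) (i : Fin n) : 0 ≤ softmax n x i :=
  div_nonneg (Real.exp_pos _).le (S_pos hn x).le

lemma p_le_one (x : EuclideanSpace ℝ (Fin n)) (i : Fin n) : softmax n x i ≤ 1 := by
  simp only [softmax]
  rw [div_le_one (S_pos hn x)]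
  exact Finset.single_le_sum (fun j _ => (Real.exp_pos (x j)).le) (Finset.mem_univ i)

lemma p_sum (x : EuclideanSpace ℝ (Fin n)) : ∑ i, softmax n x i = 1 := by
  simp only [softmax]
  rw [← Finset.sum_div]
  exact div_self (S_pos hn x).ne'

lemma hasFDerivAt_softmax (x : EuclideanSpace ℝ (Fin n)) :
    HasFDerivAt (softmax n) (J n x) x := by
  have hS0 : (∑ j, Real.exp (x j)) ≠ 0 := (S_pos hn x).ne'
  have hproj : ∀ i : Fin n, HasFDerivAt (fun y : EuclideanSpace ℝ (Fin n) => y i)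
      (EuclideanSpace.proj i : EuclideanSpace ℝ (Fin n) →L[ℝ] ℝ) x := by
    intro i
    exact (EuclideanSpace.proj i : EuclideanSpace ℝ (Fin n) →L[ℝ] ℝ).hasFDerivAt
  have hS : HasFDerivAt (fun y : EuclideanSpace ℝ (Fin n) => ∑ j, Real.exp (y j))
      (∑ j, Real.exp (x j) • (EuclideanSpace.proj j : EuclideanSpace ℝ (Fin n) →L[ℝ] ℝ)) x := by
    exact HasFDerivAt.fun_sum fun j _ => (hproj j).exp
  have hinv : HasFDerivAt (fun y : EuclideanSpace ℝ (Fin n) => (∑ j, Real.exp (y j))⁻¹)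
      ((-((∑ j, Real.exp (x j)) ^ 2)⁻¹) •
        (∑ j, Real.exp (x j) • (EuclideanSpace.proj j : EuclideanSpace ℝ (Fin n) →L[ℝ] ℝ))) x :=
    (hasDerivAt_inv hS0).comp_hasFDerivAt x hS
  have hcoord : ∀ i : Fin n, HasFDerivAt (fun y : EuclideanSpace ℝ (Fin n) => softmax n y i)
      (softmax n x i • ((EuclideanSpace.proj i : EuclideanSpace ℝ (Fin n) →L[ℝ] ℝ)
        - ∑ j, softmax n x j • (EuclideanSpace.proj j : EuclideanSpace ℝ (Fin n) →L[ℝ] ℝ))) x := by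
    intro i
    have hmul := ((hproj i).exp).fun_mul hinv
    have heq : (fun y : EuclideanSpace ℝ (Fin n) => Real.exp (y i) * (∑ j, Real.exp (y j))⁻¹)
        = fun y => softmax n y i := by
      funext y
      simp [softmax, div_eq_mul_inv]
    rw [heq] at hmul
    refine hmul.congr_fderiv ?_
    symm
    ext v
    simp only [ContinuousLinearMap.smul_apply, ContinuousLinearMap.sub_apply,
      ContinuousLinearMap.add_apply, ContinuousLinearMap.coe_sum', Finset.sum_apply,
      smul_eq_mul, softmax]
    rw [mul_sub, Finset.mul_sum, sub_eq_neg_add, ← Finset.sum_neg_distrib]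
    congr 1
    · rw [Finset.mul_sum, Finset.mul_sum]
      apply Finset.sum_congr rfl
      intro j _
      field_simp
    · field_simp
  -- assemble
  have : softmax n = ⇑(EuclideanSpace.equiv (Fin n) ℝ).symm ∘ (fun y i => softmax n y i) := rfl
  rw [this]
  refine HasFDerivAt.comp x ((EuclideanSpace.equiv (Fin n) ℝ).symm.hasFDerivAt) ?_
  exact hasFDerivAt_pi.mpr hcoord

lemma J_norm_le (x : EuclideanSpace ℝ (Fin n)) : ‖J n x‖ ≤ 1 := by
  apply ContinuousLinearMap.opNorm_le_bound _ zero_le_one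
  intro v
  rw [one_mul]
  set p := fun i => softmax n x i with hp
  set m := ∑ j, p j * v j with hm
  have h0 : ∀ i, 0 ≤ p i := p_nonneg hn x
  have h1 : ∀ i, p i ≤ 1 := p_le_one hn x
  have hsum : ∑ i, p i = 1 := p_sum hn x
  have hEnorm : ∀ w : EuclideanSpace ℝ (Fin n), ‖w‖ = Real.sqrt (∑ i, w i ^ 2) := by
    intro w
    rw [EuclideanSpace.norm_eq]
    congr 1
    apply Finset.sum_congr rfl
    intro i _
    rw [Real.norm_eq_abs, sq_abs]
  rw [hEnorm, hEnorm]
  apply Real.sqrt_le_sqrt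
  have hJv : ∀ i, (J n x v) i = p i * (v i - m) := fun i => J_apply n x v i
  calc ∑ i, (J n x v) i ^ 2 = ∑ i, (p i)^2 * (v i - m)^2 := by
        apply Finset.sum_congr rfl; intro i _; rw [hJv i]; ring
    _ ≤ ∑ i, p i * (v i - m)^2 := by
        apply Finset.sum_le_sum; intro i _
        apply mul_le_mul_of_nonneg_right _ (sq_nonneg _)
        calc (p i)^2 = p i * p i := sq (p i) ▸ rfl
          _ ≤ 1 * p i := mul_le_mul_of_nonneg_right (h1 i) (h0 i)
          _ = p i := one_mul _
    _ = (∑ i, p i * v i ^ 2) - m ^ 2 := by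
        have : ∀ i, p i * (v i - m)^2 = p i * v i ^2 - 2 * m * (p i * v i) + m^2 * p i := by
          intro i; ring
        simp only [this]
        rw [Finset.sum_add_distrib, Finset.sum_sub_distrib, ← Finset.mul_sum, ← Finset.mul_sum,
          ← hm, hsum]
        ring
    _ ≤ ∑ i, v i ^ 2 := by
        have : (∑ i, p i * v i ^ 2) ≤ ∑ i, v i ^ 2 := by
          apply Finset.sum_le_sum; intro i _
          calc p i * v i ^2 ≤ 1 * v i ^2 := mul_le_mul_of_nonneg_right (h1 i) (sq_nonneg _)
            _ = v i ^2 := one_mul _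
        nlinarith [sq_nonneg m]

end SoftmaxAux

theorem softmax_lipschitz (n : ℕ) (hn : 1 ≤ n) : LipschitzWith 1 (softmax n) := by
  have hdiff : Differentiable ℝ (softmax n) :=
    fun x => (SoftmaxAux.hasFDerivAt_softmax hn x).differentiableAt
  apply lipschitzWith_of_nnnorm_fderiv_le hdiff
  intro x
  rw [(SoftmaxAux.hasFDerivAt_softmax hn x).fderiv]
  rw [← NNReal.coe_le_coe]
  exact_mod_cast SoftmaxAux.J_norm_le hn x
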